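/- Let A be a deterministic parity word automaton over a finite nonempty alphabet Σ whose transition graph is strongly connected (every state is reachable by a path from every other state, and all states are reachable from q₀). Let ι ∈ {0,1} and κ ≥ ι be such that A contains a (ι,κ)-flower, A contains no (ι',κ')-flower with κ' − ι' > κ − ι (ι' ∈ {0,1}), and A contains no (ι,κ)‾-flower (i.e. no (1,κ+1)-flower when ι = 0 and no (0,κ−1)-flower when ι = 1). Then L(A) ≡_W L_{(ι,κ)}. -/

import Mathlib

open Filter

/-- Parity acceptance: the largest value occurring infinitely often is even. -/
def ParityAccept (f : ℕ → ℕ) : Prop :=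
  Even (sSup {r : ℕ | ∃ᶠ n in atTop, f n = r})

/-- A deterministic parity word automaton over alphabet `Alpha` with state set `Q`. -/
structure DPWA (Alpha : Type) (Q : Type) where
  init : Q
  delta : Q → Alpha → Q
  rank : Q → ℕ

namespace DPWA

variable {Alpha Q : Type}

/-- The state of the run of `M` on `w` after `n` letters. -/
def run (M : DPWA Alpha Q) (w : ℕ → Alpha) : ℕ → Q
  | 0 => M.init
  | n + 1 => M.delta (run M w n) (w n)

/-- The language recognised by `M`. -/
def Lang (M : DPWA Alpha Q) : Set (ℕ → Alpha) :=
  {w | ParityAccept fun n => M.rank (M.run w n)}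

/-- The state reached from `q` following a finite word. -/
def follow (M : DPWA Alpha Q) (q : Q) (steps : List Alpha) : Q :=
  steps.foldl M.delta q

/-- All states visited along a path, the starting state included. -/
def statesOn (M : DPWA Alpha Q) (q : Q) (steps : List Alpha) : List Q :=
  List.scanl M.delta q steps

/-- The largest rank of a state visited along a path. -/
def maxRankOn (M : DPWA Alpha Q) (q : Q) (steps : List Alpha) : ℕ :=
  ((M.statesOn q steps).map M.rank).foldr max 0

/-- `steps` is a loop at `q` (a path of positive length from `q` to `q`). -/
def IsLoop (M : DPWA Alpha Q) (q : Q) (steps : List Alpha) : Prop :=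
  steps ≠ [] ∧ M.follow q steps = q

/-- `M` contains an `(i,k)`-flower. -/
def HasFlower (M : DPWA Alpha Q) (i k : ℕ) : Prop :=
  ∃ (q : Q) (lam : ℕ → List Alpha),
    (∀ j, i ≤ j → j ≤ k → M.IsLoop q (lam j) ∧ M.maxRankOn q (lam j) % 2 = j % 2) ∧
    (∀ j, i ≤ j → j < k → M.maxRankOn q (lam j) < M.maxRankOn q (lam (j + 1)))

/-- `q` is reachable from the initial state. -/
def Reachable (M : DPWA Alpha Q) (q : Q) : Prop :=
  ∃ steps, M.follow M.init steps = q

end DPWA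

/-- Wadge reducibility. -/
def WadgeLE {X Y : Type} [TopologicalSpace X] [TopologicalSpace Y]
    (A : Set X) (B : Set Y) : Prop :=
  ∃ φ : X → Y, Continuous φ ∧ A = φ ⁻¹' B

/-- The alphabet `{i, i+1, …, k}`. -/
def IdxAlpha (i k : ℕ) : Type := {n : ℕ // i ≤ n ∧ n ≤ k}

instance (i k : ℕ) : TopologicalSpace (IdxAlpha i k) := ⊥
instance (i k : ℕ) : DiscreteTopology (IdxAlpha i k) := ⟨rfl⟩

/-- The parity language `L_{(i,k)}`: sequences over `{i,…,k}` whose largest value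
occurring infinitely often is even. -/
def Lidx (i k : ℕ) : Set (ℕ → IdxAlpha i k) :=
  {w | Even (sSup {r : ℕ | ∃ᶠ n in atTop, (w n).1 = r})}
namespace DPWA
variable {Alpha Q : Type} (M : DPWA Alpha Q)

theorem follow_append (q : Q) (l₁ l₂ : List Alpha) :
    M.follow q (l₁ ++ l₂) = M.follow (M.follow q l₁) l₂ := List.foldl_append ..

theorem statesOn_eq_map (q : Q) (l : List Alpha) :
    M.statesOn q l = (List.range (l.length + 1)).map (fun t => M.follow q (l.take t)) := by
  induction l generalizing q with
  | nil => simp [statesOn, follow, List.scanl]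
  | cons a l ih =>
    have h0 : M.statesOn q (a :: l) = q :: M.statesOn (M.delta q a) l := List.scanl_cons
    have h2 : List.range (l.length + 1 + 1) = 0 :: (List.range (l.length + 1)).map Nat.succ :=
      List.range_succ_eq_map
    rw [h0, ih, List.length_cons, h2, List.map_cons, List.map_map]
    congr 1

theorem mem_statesOn_iff {s q : Q} {l : List Alpha} :
    s ∈ M.statesOn q l ↔ ∃ t, t ≤ l.length ∧ M.follow q (l.take t) = s := by
  rw [statesOn_eq_map]
  simp only [List.mem_map, List.mem_range, Nat.lt_succ_iff]

theorem self_mem_statesOn (q : Q) (l : List Alpha) : q ∈ M.statesOn q l :=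
  M.mem_statesOn_iff.2 ⟨0, Nat.zero_le _, rfl⟩

theorem follow_mem_statesOn (q : Q) (l : List Alpha) : M.follow q l ∈ M.statesOn q l :=
  M.mem_statesOn_iff.2 ⟨l.length, le_rfl, by rw [List.take_length]⟩

theorem statesOn_ne_nil (q : Q) (l : List Alpha) : M.statesOn q l ≠ [] := by
  intro h; have := M.self_mem_statesOn q l; rw [h] at this; exact absurd this List.not_mem_nil

theorem mem_statesOn_append {s q : Q} {l₁ l₂ : List Alpha} :
    s ∈ M.statesOn q (l₁ ++ l₂) ↔ s ∈ M.statesOn q l₁ ∨ s ∈ M.statesOn (M.follow q l₁) l₂ := by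
  simp only [mem_statesOn_iff]
  constructor
  · rintro ⟨t, ht, rfl⟩
    rw [List.length_append] at ht
    rcases le_or_gt t l₁.length with h | h
    · left
      refine ⟨t, h, ?_⟩
      rw [List.take_append, Nat.sub_eq_zero_of_le h, List.take_zero,
        List.append_nil]
    · right
      have h1 : (l₁ ++ l₂).take t = l₁ ++ l₂.take (t - l₁.length) := by
        rw [List.take_append, List.take_of_length_le (le_of_lt h)]
      refine ⟨t - l₁.length, by omega, ?_⟩
      rw [h1, follow_append]
  · rintro (⟨t, ht, rfl⟩ | ⟨t, ht, rfl⟩)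
    · refine ⟨t, by rw [List.length_append]; omega, ?_⟩
      rw [List.take_append, Nat.sub_eq_zero_of_le ht, List.take_zero,
        List.append_nil]
    · have h1 : (l₁ ++ l₂).take (l₁.length + t) = l₁ ++ l₂.take t := by
        rw [List.take_append, List.take_of_length_le (Nat.le_add_right _ _),
          Nat.add_sub_cancel_left]
      refine ⟨l₁.length + t, by rw [List.length_append]; omega, ?_⟩
      rw [h1, follow_append]

end DPWA
namespace DPWA
section MXs
variable {Alpha Q : Type} (M : DPWA Alpha Q)

theorem foldr_max_le {l : List ℕ} {c : ℕ} (h : ∀ x ∈ l, x ≤ c) : l.foldr max 0 ≤ c := by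
  induction l with
  | nil => exact Nat.zero_le c
  | cons a l ih => exact max_le (h a (by simp)) (ih fun x hx => h x (by simp [hx]))

theorem le_foldr_max {l : List ℕ} {x : ℕ} (h : x ∈ l) : x ≤ l.foldr max 0 := by
  induction l with
  | nil => simp at h
  | cons a l ih =>
    rcases List.mem_cons.1 h with rfl | h
    · exact le_max_left _ _
    · exact le_trans (ih h) (le_max_right _ _)

theorem foldr_max_mem {l : List ℕ} (h : l ≠ []) : l.foldr max 0 ∈ l := by
  induction l with
  | nil => exact absurd rfl h
  | cons a l ih =>
    rcases eq_or_ne l [] with rfl | hl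
    · simp
    · show max a (l.foldr max 0) ∈ _
      rcases max_cases a (l.foldr max 0) with ⟨h1, _⟩ | ⟨h1, _⟩
      · rw [h1]; simp
      · rw [h1]; exact List.mem_cons_of_mem _ (ih hl)

/-- max of `f` over the states visited along a path. -/
def MX (f : Q → ℕ) (q : Q) (l : List Alpha) : ℕ := ((M.statesOn q l).map f).foldr max 0

theorem maxRankOn_eq_MX (q : Q) (l : List Alpha) : M.maxRankOn q l = M.MX M.rank q l := rfl

theorem MX_le {f : Q → ℕ} {q : Q} {l : List Alpha} {c : ℕ}
    (h : ∀ s ∈ M.statesOn q l, f s ≤ c) : M.MX f q l ≤ c :=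
  foldr_max_le (by rintro x hx; rcases List.mem_map.1 hx with ⟨s, hs, rfl⟩; exact h s hs)

theorem le_MX {f : Q → ℕ} {q s : Q} {l : List Alpha} (h : s ∈ M.statesOn q l) :
    f s ≤ M.MX f q l :=
  le_foldr_max (List.mem_map.2 ⟨s, h, rfl⟩)

theorem exists_MX (f : Q → ℕ) (q : Q) (l : List Alpha) :
    ∃ s ∈ M.statesOn q l, f s = M.MX f q l := by
  have h : ((M.statesOn q l).map f) ≠ [] := by
    simp [List.map_eq_nil_iff]; exact M.statesOn_ne_nil q l
  rcases List.mem_map.1 (foldr_max_mem h) with ⟨s, hs, h2⟩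
  exact ⟨s, hs, h2⟩

theorem MX_congr {f g : Q → ℕ} {q : Q} {l : List Alpha}
    (h : ∀ s ∈ M.statesOn q l, f s = g s) : M.MX f q l = M.MX g q l := by
  unfold MX
  rw [List.map_congr_left h]

theorem MX_add (f : Q → ℕ) (c : ℕ) (q : Q) (l : List Alpha) :
    M.MX (fun s => f s + c) q l = M.MX f q l + c := by
  unfold MX
  have h : ∀ L : List Q, L ≠ [] →
      (L.map fun s => f s + c).foldr max 0 = (L.map f).foldr max 0 + c := by
    intro L hL
    induction L with
    | nil => exact absurd rfl hL
    | cons a L ih =>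
      rcases eq_or_ne L [] with rfl | h0
      · simp
      · show max (f a + c) _ = max (f a) _ + c
        rw [ih h0, max_add_add_right]
  exact h _ (M.statesOn_ne_nil q l)

/-- a loop at `q` all of whose states lie in `T`. -/
def CycIn (T : Finset Q) (q : Q) (l : List Alpha) : Prop :=
  l ≠ [] ∧ M.follow q l = q ∧ ∀ s ∈ M.statesOn q l, s ∈ T

theorem CycIn.base_mem {M : DPWA Alpha Q} {T : Finset Q} {q : Q} {l : List Alpha}
    (h : M.CycIn T q l) : q ∈ T :=
  h.2.2 q (M.self_mem_statesOn q l)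

theorem cycIn_append {T : Finset Q} {q : Q} {l₁ l₂ : List Alpha}
    (h₁ : M.CycIn T q l₁) (h₂ : M.CycIn T q l₂) : M.CycIn T q (l₁ ++ l₂) ∧
      ∀ s, s ∈ M.statesOn q (l₁ ++ l₂) ↔ (s ∈ M.statesOn q l₁ ∨ s ∈ M.statesOn q l₂) := by
  have hm : ∀ s, s ∈ M.statesOn q (l₁ ++ l₂) ↔ (s ∈ M.statesOn q l₁ ∨ s ∈ M.statesOn q l₂) := by
    intro s; rw [M.mem_statesOn_append, h₁.2.1]
  refine ⟨⟨by simp [h₁.1], ?_, ?_⟩, hm⟩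
  · rw [M.follow_append, h₁.2.1, h₂.2.1]
  · intro s hs
    rcases (hm s).1 hs with h | h
    · exact h₁.2.2 s h
    · exact h₂.2.2 s h

theorem cycIn_rotate {T : Finset Q} {q a : Q} {l : List Alpha}
    (h : M.CycIn T q l) (ha : a ∈ M.statesOn q l) :
    ∃ l', M.CycIn T a l' ∧ (∀ s, s ∈ M.statesOn a l' ↔ s ∈ M.statesOn q l) := by
  rcases M.mem_statesOn_iff.1 ha with ⟨t, ht, hfa⟩
  refine ⟨l.drop t ++ l.take t, ?_⟩
  have hfd : M.follow a (l.drop t) = q := by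
    rw [← hfa, ← M.follow_append, List.take_append_drop, h.2.1]
  have hlen2 : (l.drop t ++ l.take t).length = l.length := by
    rw [List.length_append, List.length_drop, List.length_take]; omega
  have key : ∀ u, u ≤ l.length → M.follow a ((l.drop t ++ l.take t).take u) =
      if u ≤ l.length - t then M.follow q (l.take (t + u)) else M.follow q (l.take (u - (l.length - t))) := by
    intro u hu
    rcases le_or_gt u (l.length - t) with h1 | h1
    · rw [if_pos h1]
      have : (l.drop t ++ l.take t).take u = (l.drop t).take u := by
        rw [List.take_append,
          Nat.sub_eq_zero_of_le (by rw [List.length_drop]; omega),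
          List.take_zero, List.append_nil]
      rw [this, ← hfa, ← M.follow_append, ← List.take_add]
    · rw [if_neg (by omega)]
      have : (l.drop t ++ l.take t).take u = l.drop t ++ (l.take t).take (u - (l.length - t)) := by
        rw [List.take_append,
          List.take_of_length_le (by rw [List.length_drop]; omega), List.length_drop]
      rw [this, M.follow_append, hfd, List.take_take, min_eq_left (by omega)]
  constructor
  · refine ⟨?_, ?_, ?_⟩
    · intro hc; rw [hc] at hlen2; simp at hlen2; exact h.1 (by rw [← List.length_eq_zero_iff]; omega)
    · have h3 : (l.drop t ++ l.take t) = (l.drop t ++ l.take t).take l.length :=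
        (List.take_of_length_le (le_of_eq hlen2)).symm
      rw [h3, key l.length le_rfl]
      rcases le_or_gt l.length (l.length - t) with h1 | h1
      · rw [if_pos h1]
        have ht0 : t = 0 := by omega
        subst ht0
        have haq : q = a := by rw [← hfa, List.take_zero]; rfl
        rw [Nat.zero_add, List.take_length, h.2.1, haq]
      · rw [if_neg (by omega), show l.length - (l.length - t) = t by omega]
        exact hfa
    · intro s hs
      rcases M.mem_statesOn_iff.1 hs with ⟨u, hu, hfs⟩
      rw [hlen2] at hu
      rw [key u hu] at hfs
      split at hfs
      · exact h.2.2 s (M.mem_statesOn_iff.2 ⟨t + u, by omega, hfs⟩)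
      · exact h.2.2 s (M.mem_statesOn_iff.2 ⟨u - (l.length - t), by omega, hfs⟩)
  · intro s
    constructor
    · intro hs
      rcases M.mem_statesOn_iff.1 hs with ⟨u, hu, hfs⟩
      rw [hlen2] at hu
      rw [key u hu] at hfs
      split at hfs
      · exact M.mem_statesOn_iff.2 ⟨t + u, by omega, hfs⟩
      · exact M.mem_statesOn_iff.2 ⟨u - (l.length - t), by omega, hfs⟩
    · intro hs
      rcases M.mem_statesOn_iff.1 hs with ⟨v, hv, hfs⟩
      rcases le_or_gt t v with h1 | h1
      · refine M.mem_statesOn_iff.2 ⟨v - t, by rw [hlen2]; omega, ?_⟩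
        rw [key (v - t) (by omega), if_pos (by omega), show t + (v - t) = v by omega]
        exact hfs
      · rcases Nat.eq_zero_or_pos v with rfl | hv0
        · have hsq : s = q := by rw [← hfs, List.take_zero]; rfl
          refine M.mem_statesOn_iff.2 ⟨l.length - t, by rw [hlen2]; omega, ?_⟩
          rw [key (l.length - t) (by omega), if_pos le_rfl,
            show t + (l.length - t) = l.length by omega, List.take_length, h.2.1, hsq]
        · refine M.mem_statesOn_iff.2 ⟨v + (l.length - t), by rw [hlen2]; omega, ?_⟩
          rw [key (v + (l.length - t)) (by omega), if_neg (by omega),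
            show v + (l.length - t) - (l.length - t) = v by omega]
          exact hfs

end MXs
end DPWA
namespace DPWA
section Flowers
variable {Alpha Q : Type} [Fintype Q] (M : DPWA Alpha Q)

theorem natSSup_le {s : Set ℕ} {c : ℕ} (h : ∀ x ∈ s, x ≤ c) : sSup s ≤ c := by
  rcases s.eq_empty_or_nonempty with rfl | hne
  · rw [csSup_empty]; exact Nat.zero_le c
  · exact csSup_le hne h

/-- `(ι,κ)`-flower inside `T`. -/
def FlowerIn (T : Finset Q) (ι κ : ℕ) : Prop :=
  ι ≤ κ ∧ ∃ (q : Q) (lam : ℕ → List Alpha),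
    (∀ j, ι ≤ j → j ≤ κ → M.CycIn T q (lam j) ∧ M.MX M.rank q (lam j) % 2 = j % 2) ∧
    (∀ j, ι ≤ j → j < κ → M.MX M.rank q (lam j) < M.MX M.rank q (lam (j + 1)))

def FLset (T : Finset Q) : Set ℕ := {d | ∃ ι κ, κ = d + ι ∧ M.FlowerIn T ι κ}

/-- Maximal flower length within `T`. -/
noncomputable def FL (T : Finset Q) : ℕ := sSup (M.FLset T)

theorem MX_rank_le_sup {T : Finset Q} {q : Q} {l : List Alpha}
    (h : ∀ s ∈ M.statesOn q l, s ∈ T) : M.MX M.rank q l ≤ T.sup M.rank :=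
  M.MX_le fun s hs => Finset.le_sup (h s hs)

theorem FLset_bdd {T : Finset Q} : ∀ d ∈ M.FLset T, d ≤ T.sup M.rank := by
  rintro d ⟨ι, κ, hκ, hik, q, lam, h1, h2⟩
  have grow : ∀ e, ι + e ≤ κ → M.MX M.rank q (lam ι) + e ≤ M.MX M.rank q (lam (ι + e)) := by
    intro e
    induction e with
    | zero => intro _; simp
    | succ e ih =>
      intro he
      simp only [← Nat.add_assoc]
      have := h2 (ι + e) (by omega) (by omega)
      have := ih (by omega)
      omega
  have h3 := grow d (by omega)
  have h4 : M.MX M.rank q (lam (ι + d)) ≤ T.sup M.rank :=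
    M.MX_rank_le_sup (h1 (ι + d) (by omega) (by omega)).1.2.2
  omega

theorem le_FL {T : Finset Q} {ι κ : ℕ} (h : M.FlowerIn T ι κ) : κ - ι ≤ M.FL T :=
  le_csSup ⟨T.sup M.rank, fun d hd => M.FLset_bdd d hd⟩ ⟨ι, κ, by have := h.1; omega, h⟩

theorem FL_le {T : Finset Q} {c : ℕ} (h : ∀ d ∈ M.FLset T, d ≤ c) : M.FL T ≤ c :=
  natSSup_le h

theorem FL_exists {T : Finset Q} (hne : (M.FLset T).Nonempty) :
    ∃ ι κ, κ = M.FL T + ι ∧ M.FlowerIn T ι κ :=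
  Nat.sSup_mem hne ⟨T.sup M.rank, fun d hd => M.FLset_bdd d hd⟩

theorem flowerIn_mono {T T' : Finset Q} (hT : T ⊆ T') {ι κ : ℕ}
    (h : M.FlowerIn T ι κ) : M.FlowerIn T' ι κ := by
  obtain ⟨hik, q, lam, h1, h2⟩ := h
  exact ⟨hik, q, lam, fun j hj1 hj2 =>
    ⟨⟨(h1 j hj1 hj2).1.1, (h1 j hj1 hj2).1.2.1, fun s hs => hT ((h1 j hj1 hj2).1.2.2 s hs)⟩,
      (h1 j hj1 hj2).2⟩, h2⟩

theorem FL_mono {T T' : Finset Q} (hT : T ⊆ T') : M.FL T ≤ M.FL T' :=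
  M.FL_le fun d hd => by
    obtain ⟨ι, κ, hκ, hf⟩ := hd
    have := M.le_FL (M.flowerIn_mono hT hf)
    omega

theorem cyc_flower {T : Finset Q} {q : Q} {l : List Alpha} (h : M.CycIn T q l) :
    M.FlowerIn T (M.MX M.rank q l % 2) (M.MX M.rank q l % 2) := by
  refine ⟨le_rfl, q, fun _ => l, ?_, ?_⟩
  · intro j hj1 hj2
    refine ⟨h, ?_⟩
    show M.MX M.rank q l % 2 = j % 2
    omega
  · intro j hj1 hj2
    omega

/-- strong connectivity via cycles within `T`. -/
def Conn (T : Finset Q) : Prop :=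
  ∀ p ∈ T, ∀ r ∈ T, ∃ q l, M.CycIn T q l ∧ p ∈ M.statesOn q l ∧ r ∈ M.statesOn q l

theorem FLset_nonempty {T : Finset Q} (hne : T.Nonempty) (hC : M.Conn T) :
    (M.FLset T).Nonempty := by
  obtain ⟨p, hp⟩ := hne
  obtain ⟨q, l, hcyc, -, -⟩ := hC p hp p hp
  exact ⟨0, _, _, (Nat.zero_add _).symm, M.cyc_flower hcyc⟩

/-- the top of a maximal flower has the parity of the largest rank. -/
theorem flower_top_parity {T : Finset Q} (hC : M.Conn T) {ι κ : ℕ}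
    (hf : M.FlowerIn T ι κ) (hmax : κ - ι = M.FL T) : κ % 2 = (T.sup M.rank) % 2 := by
  by_contra hne
  obtain ⟨hik, q, lam, h1, h2⟩ := hf
  have hq : q ∈ T := (h1 ι le_rfl hik).1.base_mem
  obtain ⟨x, hx, hmx⟩ := Finset.exists_mem_eq_sup T ⟨q, hq⟩ M.rank
  obtain ⟨qb, l0, hcyc, hqmem, hxmem⟩ := hC q hq x hx
  obtain ⟨l1, hc1, hiff⟩ := M.cycIn_rotate hcyc hqmem
  have hm1 : M.MX M.rank q l1 = T.sup M.rank := by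
    refine le_antisymm (M.MX_rank_le_sup fun s hs => hcyc.2.2 s ((hiff s).1 hs)) ?_
    rw [hmx]
    exact M.le_MX ((hiff x).2 hxmem)
  have hnew : M.FlowerIn T ι (κ + 1) := by
    refine ⟨by omega, q, Function.update lam (κ + 1) l1, ?_, ?_⟩
    · intro j hj1 hj2
      rcases eq_or_ne j (κ + 1) with rfl | hj
      · rw [Function.update_self, hm1]
        exact ⟨hc1, by omega⟩
      · rw [Function.update_of_ne hj]
        exact h1 j hj1 (by omega)
    · intro j hj1 hj2
      rcases eq_or_ne j κ with rfl | hj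
      · rw [Function.update_of_ne (by omega), Function.update_self, hm1]
        have hle : M.MX M.rank q (lam j) ≤ T.sup M.rank :=
          M.MX_rank_le_sup (h1 j hik le_rfl).1.2.2
        have hpar := (h1 j hik le_rfl).2
        omega
      · rw [Function.update_of_ne (by omega), Function.update_of_ne (by omega)]
        exact h2 j hj1 (by omega)
  have := M.le_FL hnew
  omega

end Flowers
end DPWA
namespace DPWA
section Key
variable {Alpha Q : Type} [Fintype Q] (M : DPWA Alpha Q)

/-- base parity of the canonical relabelling interval for `T`. -/
noncomputable def pbase (T : Finset Q) : ℕ := (T.sup M.rank + M.FL T) % 2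

/-- Key lemma: canonical relabelling of a strongly connected part into
`[pbase T, pbase T + FL T]` preserving cycle parities. -/
theorem key2 : ∀ (n : ℕ) (T : Finset Q), T.card ≤ n → T.Nonempty → M.Conn T →
    ∃ g : Q → ℕ,
      (∀ s ∈ T, M.pbase T ≤ g s ∧ g s ≤ M.pbase T + M.FL T) ∧
      (∀ q l, M.CycIn T q l → M.MX g q l % 2 = M.MX M.rank q l % 2) := by
  intro n
  induction n with
  | zero =>
    intro T hcard hne _
    exact absurd (Finset.card_pos.2 hne) (by omega)
  | succ n ih =>
    intro T hcard hne hC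
    classical
    have hpdef : M.pbase T = (T.sup M.rank + M.FL T) % 2 := rfl
    -- the top parity of T
    obtain ⟨ι₀, κ₀, hκ₀, hf₀⟩ := M.FL_exists (M.FLset_nonempty hne hC)
    have htop : κ₀ % 2 = (T.sup M.rank) % 2 := M.flower_top_parity hC hf₀ (by omega)
    -- the maximal-rank states
    obtain ⟨X, hXdef⟩ : ∃ X : Finset Q, X = T.filter (fun s => M.rank s = T.sup M.rank) :=
      ⟨_, rfl⟩
    obtain ⟨xm, hxm, hrxm⟩ := Finset.exists_mem_eq_sup T hne M.rank
    have hXne : X.Nonempty := ⟨xm, by rw [hXdef]; exact Finset.mem_filter.2 ⟨hxm, hrxm.symm⟩⟩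
    have hXsub : X ⊆ T := by rw [hXdef]; exact Finset.filter_subset _ _
    have hXrank : ∀ x ∈ X, M.rank x = T.sup M.rank := by
      intro x hx; rw [hXdef] at hx; exact (Finset.mem_filter.1 hx).2
    obtain ⟨T', hT'def⟩ : ∃ T' : Finset Q, T' = T \ X := ⟨_, rfl⟩
    have hT'subT : T' ⊆ T := by rw [hT'def]; exact Finset.sdiff_subset
    have hT'mem : ∀ s, s ∈ T' ↔ s ∈ T ∧ s ∉ X := by
      intro s; rw [hT'def]; exact Finset.mem_sdiff
    have hT'card : T'.card ≤ n := by
      have h2 : T' ⊂ T := by rw [hT'def]; exact Finset.sdiff_ssubset hXsub hXne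
      have := Finset.card_lt_card h2
      omega
    -- classes of the cycle-connectivity relation on T'
    obtain ⟨Cl, hCldef⟩ : ∃ Cl : Q → Finset Q, Cl = fun s =>
        T'.filter (fun x => ∃ l, M.CycIn T' s l ∧ x ∈ M.statesOn s l) := ⟨_, rfl⟩
    have hClmem : ∀ s x, x ∈ Cl s ↔ x ∈ T' ∧ ∃ l, M.CycIn T' s l ∧ x ∈ M.statesOn s l := by
      intro s x; rw [hCldef]; exact Finset.mem_filter
    have hCl_self : ∀ s, (∃ l, M.CycIn T' s l) → s ∈ Cl s := by
      rintro s ⟨l, hl⟩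
      exact (hClmem s s).2 ⟨hl.base_mem, l, hl, M.self_mem_statesOn s l⟩
    have hCl_closed : ∀ s l, M.CycIn T' s l → ∀ x ∈ M.statesOn s l, x ∈ Cl s := by
      intro s l hsl x hx
      exact (hClmem s x).2 ⟨hsl.2.2 x hx, l, hsl, hx⟩
    have hCl_sub : ∀ s, Cl s ⊆ T' := by
      intro s x hx; exact ((hClmem s x).1 hx).1
    have hCl_cyc : ∀ s l, M.CycIn T' s l → M.CycIn (Cl s) s l := by
      intro s l hsl
      exact ⟨hsl.1, hsl.2.1, hCl_closed s l hsl⟩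
    have hCl_onc : ∀ s x, x ∈ Cl s → ∃ l, M.CycIn T' x l := by
      intro s x hx
      obtain ⟨-, l, hl, hxl⟩ := (hClmem s x).1 hx
      obtain ⟨lx, hlx, -⟩ := M.cycIn_rotate hl hxl
      exact ⟨lx, hlx⟩
    have hCl_eq : ∀ s x, x ∈ Cl s → Cl x = Cl s := by
      intro s x hx
      obtain ⟨hxT', l, hl, hxl⟩ := (hClmem s x).1 hx
      ext y
      rw [hClmem x y, hClmem s y]
      constructor
      · rintro ⟨hyT', ly, hly, hyly⟩
        refine ⟨hyT', ?_⟩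
        obtain ⟨lx, hlx, hiffx⟩ := M.cycIn_rotate hl hxl
        have hcomb := M.cycIn_append hlx hly
        have hs_comb : s ∈ M.statesOn x (lx ++ ly) :=
          (hcomb.2 s).2 (Or.inl ((hiffx s).2 (M.self_mem_statesOn s l)))
        obtain ⟨ls, hls, hiffs⟩ := M.cycIn_rotate hcomb.1 hs_comb
        exact ⟨ls, hls, (hiffs y).2 ((hcomb.2 y).2 (Or.inr hyly))⟩
      · rintro ⟨hyT', ly, hly, hyly⟩
        refine ⟨hyT', ?_⟩
        have hcomb := M.cycIn_append hl hly
        have hx_comb : x ∈ M.statesOn s (l ++ ly) := (hcomb.2 x).2 (Or.inl hxl)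
        obtain ⟨lx, hlx, hiffx⟩ := M.cycIn_rotate hcomb.1 hx_comb
        exact ⟨lx, hlx, (hiffx y).2 ((hcomb.2 y).2 (Or.inr hyly))⟩
    have hCl_conn : ∀ s, M.Conn (Cl s) := by
      rintro s a ha b hb
      obtain ⟨-, la, hla, hala⟩ := (hClmem s a).1 ha
      obtain ⟨-, lb, hlb, hblb⟩ := (hClmem s b).1 hb
      have hcomb := M.cycIn_append hla hlb
      refine ⟨s, la ++ lb, ⟨hcomb.1.1, hcomb.1.2.1, ?_⟩,
        (hcomb.2 a).2 (Or.inl hala), (hcomb.2 b).2 (Or.inr hblb)⟩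
      intro z hz
      exact hCl_closed s (la ++ lb) hcomb.1 z hz
    have hCl_card : ∀ s, (Cl s).card ≤ n := by
      intro s
      have := Finset.card_le_card (hCl_sub s)
      omega
    have hCl_ne : ∀ s, (∃ l, M.CycIn T' s l) → (Cl s).Nonempty :=
      fun s hs => ⟨s, hCl_self s hs⟩
    -- the chosen labelling of each class
    obtain ⟨G, hGdef⟩ : ∃ G : Finset Q → (Q → ℕ), G = fun C =>
        if h : C.Nonempty ∧ M.Conn C ∧ C.card ≤ n then (ih C h.2.2 h.1 h.2.1).choose
        else fun _ => 0 := ⟨_, rfl⟩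
    have Gspec : ∀ C : Finset Q, C.Nonempty → M.Conn C → C.card ≤ n →
        (∀ s ∈ C, M.pbase C ≤ G C s ∧ G C s ≤ M.pbase C + M.FL C) ∧
        (∀ q l, M.CycIn C q l → M.MX (G C) q l % 2 = M.MX M.rank q l % 2) := by
      intro C h1 h2 h3
      rw [hGdef]
      simp only [dif_pos (⟨h1, h2, h3⟩ : C.Nonempty ∧ M.Conn C ∧ C.card ≤ n)]
      exact (ih C h3 h1 h2).choose_spec
    -- the shift for each class
    obtain ⟨aC, haCdef⟩ : ∃ aC : Finset Q → ℕ, aC = fun C =>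
        M.pbase T + ((M.pbase C + M.pbase T) % 2) := ⟨_, rfl⟩
    have haCeq : ∀ C, aC C = M.pbase T + ((M.pbase C + M.pbase T) % 2) := by
      intro C; rw [haCdef]
    -- class bound facts
    have hClb : ∀ s, (∃ l, M.CycIn T' s l) →
        aC (Cl s) + M.FL (Cl s) ≤ M.pbase T + M.FL T ∧ M.pbase (Cl s) ≤ aC (Cl s) ∧
          aC (Cl s) % 2 = M.pbase (Cl s) % 2 := by
      intro s hs
      have hCsubT : Cl s ⊆ T := fun x hx => hT'subT (hCl_sub s hx)
      have hFLle : M.FL (Cl s) ≤ M.FL T := M.FL_mono hCsubT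
      have hconnC := hCl_conn s
      have hneC := hCl_ne s hs
      obtain ⟨ι₁, κ₁, hκ₁, hf₁⟩ := M.FL_exists (M.FLset_nonempty hneC hconnC)
      have htop1 : κ₁ % 2 = ((Cl s).sup M.rank) % 2 :=
        M.flower_top_parity hconnC hf₁ (by omega)
      have e1 : M.pbase (Cl s) = ((Cl s).sup M.rank + M.FL (Cl s)) % 2 := rfl
      have e2 := haCeq (Cl s)
      have himp : M.FL (Cl s) = M.FL T → M.pbase (Cl s) % 2 = M.pbase T % 2 := by
        intro hFLeq
        have hf₁T := M.flowerIn_mono hCsubT hf₁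
        have htop2 : κ₁ % 2 = (T.sup M.rank) % 2 := M.flower_top_parity hC hf₁T (by omega)
        omega
      rcases eq_or_lt_of_le hFLle with heq | hlt
      · have := himp heq
        refine ⟨by omega, by omega, by omega⟩
      · refine ⟨by omega, by omega, by omega⟩
    -- the new labelling
    obtain ⟨g, hgdef⟩ : ∃ g : Q → ℕ, g = fun s =>
        if s ∈ X then M.pbase T + M.FL T
        else if ∃ l, M.CycIn T' s l then G (Cl s) s + (aC (Cl s) - M.pbase (Cl s))
        else M.pbase T := ⟨_, rfl⟩
    have hgX : ∀ s ∈ X, g s = M.pbase T + M.FL T := by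
      intro s hsX; rw [hgdef]; simp only [if_pos hsX]
    have hgC : ∀ s, s ∉ X → (∃ l, M.CycIn T' s l) →
        g s = G (Cl s) s + (aC (Cl s) - M.pbase (Cl s)) := by
      intro s h1 h2; rw [hgdef]; simp only [if_neg h1, if_pos h2]
    -- bounds
    have hgbound : ∀ s ∈ T, M.pbase T ≤ g s ∧ g s ≤ M.pbase T + M.FL T := by
      intro s hsT
      by_cases hsX : s ∈ X
      · rw [hgX s hsX]; omega
      · by_cases honc : ∃ l, M.CycIn T' s l
        · rw [hgC s hsX honc]
          have hb := (Gspec (Cl s) (hCl_ne s honc) (hCl_conn s) (hCl_card s)).1 s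
            (hCl_self s honc)
          have hcb := hClb s honc
          have := haCeq (Cl s)
          omega
        · rw [hgdef]; simp only [if_neg hsX, if_neg honc]; omega
    refine ⟨g, hgbound, ?_⟩
    -- cycle parity
    intro q l hcyc
    by_cases hmeet : ∃ x ∈ M.statesOn q l, x ∈ X
    · obtain ⟨x, hxl, hxX⟩ := hmeet
      have hrk : M.MX M.rank q l = T.sup M.rank := by
        refine le_antisymm (M.MX_rank_le_sup hcyc.2.2) ?_
        have := M.le_MX (f := M.rank) hxl
        have := hXrank x hxX
        omega
      have hgk : M.MX g q l = M.pbase T + M.FL T := by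
        refine le_antisymm (M.MX_le fun s hs => (hgbound s (hcyc.2.2 s hs)).2) ?_
        have := M.le_MX (f := g) hxl
        have := hgX x hxX
        omega
      rw [hrk, hgk]
      omega
    · push_neg at hmeet
      have hT'cyc : M.CycIn T' q l :=
        ⟨hcyc.1, hcyc.2.1, fun s hs => (hT'mem s).2 ⟨hcyc.2.2 s hs, hmeet s hs⟩⟩
      have honc : ∃ l', M.CycIn T' q l' := ⟨l, hT'cyc⟩
      have hCcyc : M.CycIn (Cl q) q l := hCl_cyc q l hT'cyc
      have hspec := Gspec (Cl q) (hCl_ne q honc) (hCl_conn q) (hCl_card q)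
      have hpar := hspec.2 q l hCcyc
      have hcongr : ∀ s ∈ M.statesOn q l,
          g s = G (Cl q) s + (aC (Cl q) - M.pbase (Cl q)) := by
        intro s hs
        have hsC : s ∈ Cl q := hCl_closed q l hT'cyc s hs
        have hsT' : s ∈ T' := hCl_sub q hsC
        have hsX : s ∉ X := ((hT'mem s).1 hsT').2
        have hsonc : ∃ l', M.CycIn T' s l' := hCl_onc q s hsC
        rw [hgC s hsX hsonc, hCl_eq q s hsC]
      have hMX : M.MX g q l = M.MX (G (Cl q)) q l + (aC (Cl q) - M.pbase (Cl q)) := by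
        rw [M.MX_congr hcongr, M.MX_add]
      have hcb := hClb q honc
      omega
end Key
end DPWA
namespace DPWA
section Tools
open Filter
variable {Alpha Q : Type} (M : DPWA Alpha Q)

theorem run_eq_follow (w : ℕ → Alpha) (n : ℕ) :
    M.run w n = M.follow M.init ((List.range n).map w) := by
  induction n with
  | zero => rfl
  | succ n ihn =>
    rw [List.range_succ, List.map_append, M.follow_append]
    show M.delta (M.run w n) (w n) = _
    rw [ihn]
    rfl

theorem run_seg (w : ℕ → Alpha) (t d : ℕ) :
    M.follow (M.run w t) ((List.range d).map (fun j => w (t + j))) = M.run w (t + d) := by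
  induction d with
  | zero => rfl
  | succ d ihd =>
    rw [List.range_succ, List.map_append, M.follow_append, ihd]
    rfl

theorem run_congr {w w' : ℕ → Alpha} {n : ℕ} (h : ∀ m < n, w m = w' m) :
    M.run w n = M.run w' n := by
  induction n with
  | zero => rfl
  | succ n ihn =>
    show M.delta (M.run w n) (w n) = M.delta (M.run w' n) (w' n)
    rw [ihn fun m hm => h m (by omega), h n (by omega)]

end Tools
end DPWA

section Tools2
open Filter

theorem freq_succ_iff {P : ℕ → Prop} :
    (∃ᶠ n in atTop, P (n + 1)) ↔ ∃ᶠ n in atTop, P n := by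
  rw [frequently_atTop, frequently_atTop]
  constructor
  · intro h N
    obtain ⟨n, hn, hP⟩ := h N
    exact ⟨n + 1, by omega, hP⟩
  · intro h N
    obtain ⟨n, hn, hP⟩ := h (N + 1)
    refine ⟨n - 1, by omega, ?_⟩
    rwa [show n - 1 + 1 = n by omega]

theorem exists_frequently_fiber {γ : Type*} [Finite γ] (f : ℕ → γ) :
    ∃ c, ∃ᶠ n in atTop, f n = c := by
  by_contra h
  push_neg at h
  have h2 : ∀ᶠ n in atTop, ∀ c : γ, f n ≠ c :=
    eventually_all.2 fun c => (h c)
  obtain ⟨n, hn⟩ := h2.exists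
  exact hn (f n) rfl

theorem eventually_recurrent {γ : Type*} [Finite γ] (f : ℕ → γ) :
    ∀ᶠ n in atTop, ∃ᶠ m in atTop, f m = f n := by
  have h2 : ∀ᶠ n in atTop, ∀ c : γ, ¬(∃ᶠ m in atTop, f m = c) → f n ≠ c := by
    refine eventually_all.2 fun c => ?_
    by_cases hc : ∃ᶠ m in atTop, f m = c
    · exact Eventually.of_forall fun n h => absurd hc h
    · exact (not_frequently.1 hc).mono fun n h _ => h
  refine h2.mono fun n hn => ?_
  by_contra hcon
  exact hn (f n) hcon rfl

theorem cont_of_prefix {α β : Type} [TopologicalSpace α] [DiscreteTopology α] [TopologicalSpace β]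
    [DiscreteTopology β] (F : (ℕ → α) → (ℕ → β))
    (h : ∀ w w' n, (∀ m ≤ n, w m = w' m) → F w n = F w' n) : Continuous F := by
  apply continuous_pi
  intro n
  rw [continuous_iff_continuousAt]
  intro w
  have hU : IsOpen {w' : ℕ → α | ∀ m ∈ Finset.range (n + 1), w' m = w m} := by
    have : {w' : ℕ → α | ∀ m ∈ Finset.range (n + 1), w' m = w m} =
        ⋂ m ∈ Finset.range (n + 1), (fun w' : ℕ → α => w' m) ⁻¹' {w m} := by
      ext w'; simp [Set.mem_iInter]
    rw [this]
    exact isOpen_biInter_finset fun m _ =>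
      (continuous_apply m).isOpen_preimage _ (isOpen_discrete _)
  have hmem : w ∈ {w' : ℕ → α | ∀ m ∈ Finset.range (n + 1), w' m = w m} := fun m _ => rfl
  have key : (fun v => F v n) =ᶠ[nhds w] fun _ => F w n := by
    refine Filter.eventually_of_mem (hU.mem_nhds hmem) fun w' hw' => ?_
    exact h w' w n fun m hm => hw' m (Finset.mem_range.2 (by omega))
  exact Filter.Tendsto.congr' key.symm tendsto_const_nhds

instance (i k : ℕ) : Finite (IdxAlpha i k) := by
  unfold IdxAlpha
  exact Finite.of_injective
    (fun x : {n : ℕ // i ≤ n ∧ n ≤ k} => (⟨x.1, Nat.lt_succ_of_le x.2.2⟩ : Fin (k + 1)))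
    (fun a b hab => Subtype.ext (by simpa using congrArg Fin.val hab))

end Tools2
section Dir1
open Filter

theorem conn_univ {Alpha Q : Type} [Nonempty Alpha] [Fintype Q] (M : DPWA Alpha Q)
    (hconn : ∀ p q : Q, ∃ steps, M.follow p steps = q) : M.Conn Finset.univ := by
  intro p _ r _
  obtain ⟨s₁, hs₁⟩ := hconn p r
  have a : Alpha := Classical.arbitrary Alpha
  obtain ⟨s₃, hs₃⟩ := hconn (M.delta r a) p
  refine ⟨p, s₁ ++ (a :: s₃), ⟨by simp, ?_, fun s _ => Finset.mem_univ s⟩,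
    M.self_mem_statesOn _ _, ?_⟩
  · rw [M.follow_append, hs₁]
    exact hs₃
  · exact M.mem_statesOn_append.2 (Or.inl (hs₁ ▸ M.follow_mem_statesOn p s₁))

theorem wadge_dir1 {Alpha Q : Type} [Nonempty Alpha] [Fintype Q]
    [TopologicalSpace Alpha] [DiscreteTopology Alpha]
    (M : DPWA Alpha Q)
    (hconn : ∀ p q : Q, ∃ steps, M.follow p steps = q)
    (i k : ℕ) (hi : i ≤ 1) (hik : i ≤ k)
    (hflower : M.HasFlower i k)
    (hmaximal : ∀ i' k', i' ≤ 1 → i' ≤ k' → k - i < k' - i' → ¬ M.HasFlower i' k') :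
    WadgeLE M.Lang (Lidx i k) := by
  classical
  have hconnU : M.Conn Finset.univ := conn_univ M hconn
  have hfU : M.FlowerIn Finset.univ i k := by
    obtain ⟨q, lam, h1, h2⟩ := hflower
    exact ⟨hik, q, lam, fun j hj1 hj2 =>
      ⟨⟨(h1 j hj1 hj2).1.1, (h1 j hj1 hj2).1.2, fun s _ => Finset.mem_univ s⟩,
        (h1 j hj1 hj2).2⟩, h2⟩
  have hFLU : M.FL Finset.univ = k - i := by
    apply le_antisymm
    · apply M.FL_le
      rintro d ⟨ι, κ, hκ, hf⟩
      by_contra hd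
      obtain ⟨hικ, q, lam, h1, h2⟩ := hf
      have hHF : M.HasFlower (ι % 2) (κ - ι + ι % 2) := by
        refine ⟨q, fun j => lam (j + (ι - ι % 2)), ?_, ?_⟩
        · intro j hj1 hj2
          have h3 := h1 (j + (ι - ι % 2)) (by omega) (by omega)
          refine ⟨⟨h3.1.1, h3.1.2.1⟩, ?_⟩
          have := h3.2
          show M.MX M.rank q (lam (j + (ι - ι % 2))) % 2 = j % 2
          omega
        · intro j hj1 hj2
          have h3 := h2 (j + (ι - ι % 2)) (by omega) (by omega)
          show M.MX M.rank q (lam (j + (ι - ι % 2))) <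
            M.MX M.rank q (lam (j + 1 + (ι - ι % 2)))
          rw [show j + 1 + (ι - ι % 2) = j + (ι - ι % 2) + 1 by omega]
          exact h3
      exact absurd hHF (hmaximal (ι % 2) (κ - ι + ι % 2) (by omega) (by omega) (by omega))
    · have := M.le_FL hfU
      omega
  have hm : k % 2 = (Finset.univ.sup M.rank) % 2 :=
    M.flower_top_parity hconnU hfU (by omega)
  have hpU : M.pbase Finset.univ = i := by
    have h0 : M.pbase Finset.univ = (Finset.univ.sup M.rank + M.FL Finset.univ) % 2 := rfl
    omega
  obtain ⟨g, hgb, hgp⟩ := M.key2 (Fintype.card Q) Finset.univ Finset.card_univ.le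
    ⟨M.init, Finset.mem_univ _⟩ hconnU
  have hgb' : ∀ s, i ≤ g s ∧ g s ≤ k := by
    intro s
    have := hgb s (Finset.mem_univ s)
    rw [hpU, hFLU] at this
    omega
  refine ⟨fun w n => ⟨g (M.run w (n + 1)), (hgb' _).1, (hgb' _).2⟩, ?_, ?_⟩
  · refine cont_of_prefix (α := Alpha) (β := IdxAlpha i k) _ ?_
    intro w w' n hagree
    have : M.run w (n + 1) = M.run w' (n + 1) := M.run_congr fun m hm => hagree m (by omega)
    exact Subtype.ext (congrArg g this)
  · ext w
    try simp only [Set.mem_preimage]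
    show (ParityAccept fun n => M.rank (M.run w n)) ↔ _
    obtain ⟨Ifin, hIdef⟩ : ∃ I : Finset Q,
        I = Finset.univ.filter (fun q => ∃ᶠ n in atTop, M.run w n = q) := ⟨_, rfl⟩
    have hImem : ∀ q, q ∈ Ifin ↔ ∃ᶠ n in atTop, M.run w n = q := by
      intro q; rw [hIdef]; simp [Finset.mem_filter]
    have hIne : Ifin.Nonempty := by
      obtain ⟨c, hc⟩ := exists_frequently_fiber (M.run w)
      exact ⟨c, (hImem c).2 hc⟩
    have hev : ∀ᶠ n in atTop, M.run w n ∈ Ifin :=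
      (eventually_recurrent (M.run w)).mono fun n hn => (hImem _).2 hn
    have SUP : ∀ f : Q → ℕ,
        sSup {r : ℕ | ∃ᶠ n in atTop, f (M.run w n) = r} = Ifin.sup f := by
      intro f
      have hbdd : ∀ r ∈ {r : ℕ | ∃ᶠ n in atTop, f (M.run w n) = r}, r ≤ Ifin.sup f := by
        rintro r hr
        obtain ⟨n, hn1, hn2⟩ := (hr.and_eventually hev).exists
        rw [← hn1]
        exact Finset.le_sup hn2
      obtain ⟨c, hcI, hcs⟩ := Finset.exists_mem_eq_sup Ifin hIne f
      have hmem : Ifin.sup f ∈ {r : ℕ | ∃ᶠ n in atTop, f (M.run w n) = r} := by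
        rw [hcs]
        exact ((hImem c).1 hcI).mono fun n hn => by rw [hn]
      exact le_antisymm (DPWA.natSSup_le hbdd) (le_csSup ⟨_, hbdd⟩ hmem)
    obtain ⟨N, hN⟩ := eventually_atTop.1 hev
    obtain ⟨qa, hqaI, hqas⟩ := Finset.exists_mem_eq_sup Ifin hIne M.rank
    obtain ⟨qb, hqbI, hqbs⟩ := Finset.exists_mem_eq_sup Ifin hIne g
    obtain ⟨q0, hq0I⟩ := hIne
    have hfq0 := frequently_atTop.1 ((hImem q0).1 hq0I)
    have hfqa := frequently_atTop.1 ((hImem qa).1 hqaI)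
    have hfqb := frequently_atTop.1 ((hImem qb).1 hqbI)
    obtain ⟨t0, ht0N, ht0⟩ := hfq0 N
    obtain ⟨t1, ht1, ht1e⟩ := hfqa (t0 + 1)
    obtain ⟨t2, ht2, ht2e⟩ := hfqb (t1 + 1)
    obtain ⟨t3, ht3, ht3e⟩ := hfq0 (t2 + 1)
    have hfol : M.follow (M.run w t0) ((List.range (t3 - t0)).map (fun j => w (t0 + j)))
        = M.run w t3 := by
      have := M.run_seg w t0 (t3 - t0)
      rwa [show t0 + (t3 - t0) = t3 by omega] at this
    have hcycl : M.CycIn Finset.univ (M.run w t0)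
        ((List.range (t3 - t0)).map (fun j => w (t0 + j))) := by
      refine ⟨by simp [List.range_eq_nil]; omega, ?_, fun s _ => Finset.mem_univ s⟩
      rw [hfol, ht3e, ht0]
    have hstates : ∀ s, s ∈ M.statesOn (M.run w t0)
        ((List.range (t3 - t0)).map (fun j => w (t0 + j))) ↔
        ∃ u, u ≤ t3 - t0 ∧ s = M.run w (t0 + u) := by
      intro s
      rw [DPWA.mem_statesOn_iff]
      have hlen : ((List.range (t3 - t0)).map (fun j => w (t0 + j))).length = t3 - t0 := by
        simp
      constructor
      · rintro ⟨t, ht, hf⟩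
        rw [hlen] at ht
        refine ⟨t, ht, ?_⟩
        rw [← hf, ← List.map_take, List.take_range, min_eq_left ht, M.run_seg]
      · rintro ⟨u, hu, rfl⟩
        refine ⟨u, by rw [hlen]; omega, ?_⟩
        rw [← List.map_take, List.take_range, min_eq_left hu, M.run_seg]
    have hMXf : ∀ (f : Q → ℕ) (c : Q) (t : ℕ), t0 ≤ t → t ≤ t3 → M.run w t = c →
        Ifin.sup f = f c →
        M.MX f (M.run w t0) ((List.range (t3 - t0)).map (fun j => w (t0 + j)))
          = Ifin.sup f := by
      intro f c t htl htr hrun hsup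
      refine le_antisymm (M.MX_le fun s hs => ?_) ?_
      · obtain ⟨u, hu, rfl⟩ := (hstates s).1 hs
        exact Finset.le_sup (hN (t0 + u) (by omega))
      · rw [hsup]
        refine M.le_MX ((hstates c).2 ⟨t - t0, by omega, ?_⟩)
        rw [show t0 + (t - t0) = t by omega, hrun]
    have hMXrank := hMXf M.rank qa t1 (by omega) (by omega) ht1e hqas
    have hMXg := hMXf g qb t2 (by omega) (by omega) ht2e hqbs
    have hpar := hgp (M.run w t0) _ hcycl
    rw [hMXrank, hMXg] at hpar
    show Even (sSup _) ↔ _ ∈ Lidx i k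
    have hL : {r : ℕ | ∃ᶠ n in atTop, M.rank (M.run w n) = r} =
        {r : ℕ | ∃ᶠ n in atTop, (fun m => M.rank (M.run w m)) n = r} := rfl
    rw [show (sSup {r : ℕ | ∃ᶠ n in atTop, (fun m => M.rank (M.run w m)) n = r})
      = Ifin.sup M.rank from SUP M.rank]
    show _ ↔ Even (sSup {r : ℕ | ∃ᶠ n in atTop, g (M.run w (n + 1)) = r})
    have hshift : {r : ℕ | ∃ᶠ n in atTop, g (M.run w (n + 1)) = r} =
        {r : ℕ | ∃ᶠ n in atTop, g (M.run w n) = r} := by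
      ext r
      exact freq_succ_iff (P := fun n => g (M.run w n) = r)
    rw [hshift, SUP g]
    rw [Nat.even_iff, Nat.even_iff]
    omega
end Dir1
section Dir2
open Filter

theorem getD_prefix {α : Type} {l₁ l₂ : List α} {n : ℕ} (h : l₁ <+: l₂)
    (hn : n < l₁.length) (d : α) : l₁.getD n d = l₂.getD n d := by
  obtain ⟨t, rfl⟩ := h
  rw [List.getD_eq_getElem _ _ hn, List.getD_eq_getElem _ _ (by simp; omega),
    List.getElem_append_left hn]

theorem take_app {α : Type} (l₁ l₂ : List α) (t : ℕ) :
    (l₁ ++ l₂).take (l₁.length + t) = l₁ ++ l₂.take t := by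
  rw [List.take_append, List.take_of_length_le (Nat.le_add_right _ _),
    Nat.add_sub_cancel_left]

theorem take_succ_getD {α : Type} (l : List α) (n : ℕ) (hn : n < l.length) (d : α) :
    l.take (n + 1) = l.take n ++ [l.getD n d] := by
  rw [List.take_succ, List.getElem?_eq_getElem hn, List.getD_eq_getElem _ _ hn]
  rfl

theorem wadge_dir2 {Alpha Q : Type} [Nonempty Alpha]
    [TopologicalSpace Alpha] [DiscreteTopology Alpha]
    (M : DPWA Alpha Q)
    (hreach : ∀ q, M.Reachable q)
    (i k : ℕ) (hik : i ≤ k)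
    (hflower : M.HasFlower i k) :
    WadgeLE (Lidx i k) M.Lang := by
  classical
  obtain ⟨q, lam, h1, h2⟩ := hflower
  obtain ⟨s₀, hs₀⟩ := hreach q
  have a₀ : Alpha := Classical.arbitrary Alpha
  -- the finite approximations of the image word
  obtain ⟨upTo, hup0, hupS⟩ : ∃ u : (ℕ → IdxAlpha i k) → ℕ → List Alpha,
      (∀ w, u w 0 = s₀) ∧ (∀ w n, u w (n + 1) = u w n ++ lam (w n).1) :=
    ⟨fun w n => Nat.rec s₀ (fun n ih => ih ++ lam (w n).1) n, fun w => rfl, fun w n => rfl⟩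
  have hlam_ne : ∀ j, i ≤ j → j ≤ k → lam j ≠ [] := fun j hj1 hj2 => ((h1 j hj1 hj2).1).1
  have hlam_fol : ∀ j, i ≤ j → j ≤ k → M.follow q (lam j) = q := fun j hj1 hj2 =>
    ((h1 j hj1 hj2).1).2
  have hleng : ∀ w n, n ≤ (upTo w n).length := by
    intro w n
    induction n with
    | zero => omega
    | succ n ihn =>
      rw [hupS, List.length_append]
      have := List.length_pos_iff.2 (hlam_ne (w n).1 (w n).2.1 (w n).2.2)
      omega
  have hpre : ∀ w m n, m ≤ n → upTo w m <+: upTo w n := by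
    intro w m n hmn
    induction n with
    | zero => rw [show m = 0 by omega]
    | succ n ihn =>
      rcases eq_or_lt_of_le hmn with rfl | hlt
      · exact List.prefix_rfl
      · rw [hupS]
        exact (ihn (by omega)).trans (List.prefix_append _ _)
  -- the reduction map
  set φ : (ℕ → IdxAlpha i k) → (ℕ → Alpha) :=
    fun w n => (upTo w (n + 1)).getD n a₀ with hφ
  have hφget : ∀ w n N, n < (upTo w N).length → φ w n = (upTo w N).getD n a₀ := by
    intro w n N hn
    rcases le_or_gt N (n + 1) with h | h
    · exact (getD_prefix (hpre w N (n + 1) h) hn a₀).symm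
    · exact getD_prefix (hpre w (n + 1) N (by omega)) (by have := hleng w (n + 1); omega) a₀
  have hwpre : ∀ w N mlen, mlen ≤ (upTo w N).length →
      (List.range mlen).map (φ w) = (upTo w N).take mlen := by
    intro w N mlen
    induction mlen with
    | zero => intro _; simp
    | succ mlen ihm =>
      intro hm
      rw [List.range_succ, List.map_append, ihm (by omega), List.map_singleton,
        take_succ_getD _ _ (by omega) a₀, hφget w mlen N (by omega)]
  have hfolup : ∀ w n, M.follow M.init (upTo w n) = q := by
    intro w n
    induction n with
    | zero => rw [hup0]; exact hs₀
    | succ n ihn =>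
      rw [hupS, M.follow_append, ihn, hlam_fol (w n).1 (w n).2.1 (w n).2.2]
  have hrun : ∀ w n t, t ≤ (lam (w n).1).length →
      M.run (φ w) ((upTo w n).length + t) = M.follow q ((lam (w n).1).take t) := by
    intro w n t ht
    rw [DPWA.run_eq_follow, hwpre w (n + 1) _ (by rw [hupS, List.length_append]; omega),
      hupS, take_app, M.follow_append, hfolup]
  -- block decomposition of positions
  have hpos : ∀ w n₀ m, (upTo w n₀).length ≤ m →
      ∃ n, n₀ ≤ n ∧ ∃ t, t < (lam (w n).1).length ∧ m = (upTo w n).length + t := by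
    intro w n₀ m hm
    have hP : (upTo w n₀).length ≤ m := hm
    have hb : n₀ ≤ m + 1 := by have := hleng w n₀; omega
    have hspec := Nat.findGreatest_spec (P := fun n => (upTo w n).length ≤ m) hb hP
    set n := Nat.findGreatest (fun n => (upTo w n).length ≤ m) (m + 1) with hn
    have hge : n₀ ≤ n := Nat.le_findGreatest hb hP
    have hnm : n ≤ m := by have := hleng w n; omega
    have hnot : ¬ ((upTo w (n + 1)).length ≤ m) := by
      intro hcon
      have := Nat.findGreatest_is_greatest (P := fun n => (upTo w n).length ≤ m)
        (by omega : n < n + 1) (by omega)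
      exact this hcon
    rw [hupS, List.length_append] at hnot
    exact ⟨n, hge, m - (upTo w n).length, by omega, by omega⟩
  refine ⟨φ, ?_, ?_⟩
  · refine cont_of_prefix (α := IdxAlpha i k) (β := Alpha) _ ?_
    intro w w' n hagree
    have hcongr : ∀ N, N ≤ n + 1 → upTo w N = upTo w' N := by
      intro N
      induction N with
      | zero => intro _; rw [hup0, hup0]
      | succ N ihN =>
        intro hN
        rw [hupS, hupS, ihN (by omega), hagree N (by omega)]
    show (upTo w (n + 1)).getD n a₀ = (upTo w' (n + 1)).getD n a₀
    rw [hcongr (n + 1) le_rfl]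
  · ext w
    simp only [Set.mem_preimage]
    -- the largest letter occurring infinitely often
    have hBbdd : ∀ r ∈ {r : ℕ | ∃ᶠ n in atTop, (w n).1 = r}, r ≤ k := by
      rintro r hr
      obtain ⟨n, hn⟩ := hr.exists
      rw [← hn]
      exact (w n).2.2
    have hBne : {r : ℕ | ∃ᶠ n in atTop, (w n).1 = r}.Nonempty := by
      obtain ⟨c, hc⟩ := exists_frequently_fiber w
      exact ⟨c.1, hc.mono fun n hn => by rw [hn]⟩
    have hJmem : sSup {r : ℕ | ∃ᶠ n in atTop, (w n).1 = r} ∈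
        {r : ℕ | ∃ᶠ n in atTop, (w n).1 = r} := Nat.sSup_mem hBne ⟨k, hBbdd⟩
    set J := sSup {r : ℕ | ∃ᶠ n in atTop, (w n).1 = r} with hJ
    have hJb : i ≤ J ∧ J ≤ k := by
      obtain ⟨n, hn⟩ := hJmem.exists
      rw [← hn]
      exact (w n).2
    have hJev : ∀ᶠ n in atTop, (w n).1 ≤ J := by
      refine (eventually_recurrent w).mono fun n hn => ?_
      exact le_csSup ⟨k, hBbdd⟩ (hn.mono fun m hm => by rw [hm])
    -- monotonicity of loop maxima
    have hmono : ∀ j₁ j₂, i ≤ j₁ → j₁ ≤ j₂ → j₂ ≤ k →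
        M.MX M.rank q (lam j₁) ≤ M.MX M.rank q (lam j₂) := by
      intro j₁ j₂ hj₁ hj hj₂
      have key : ∀ e, j₁ + e ≤ k → M.MX M.rank q (lam j₁) ≤ M.MX M.rank q (lam (j₁ + e)) := by
        intro e
        induction e with
        | zero => intro _; simp
        | succ e ihe =>
          intro he
          have h3 := h2 (j₁ + e) (by omega) (by omega)
          have h4 := ihe (by omega)
          show M.MX M.rank q (lam (j₁ + e + 1)) ≥ _
          rw [DPWA.maxRankOn_eq_MX, DPWA.maxRankOn_eq_MX] at h3
          omega
      have := key (j₂ - j₁) (by omega)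
      rwa [show j₁ + (j₂ - j₁) = j₂ by omega] at this
    -- sSup of ranks along the run equals MX of the J-loop
    have hupper : ∀ r ∈ {r : ℕ | ∃ᶠ m in atTop, M.rank (M.run (φ w) m) = r},
        r ≤ M.MX M.rank q (lam J) := by
      rintro r hr
      obtain ⟨N₀, hN₀⟩ := eventually_atTop.1 hJev
      obtain ⟨m, hm, hmr⟩ := frequently_atTop.1 hr ((upTo w N₀).length)
      obtain ⟨n, hn₀, t, ht, rfl⟩ := hpos w N₀ m hm
      rw [hrun w n t (by omega)] at hmr
      rw [← hmr]
      have hmem : M.follow q ((lam (w n).1).take t) ∈ M.statesOn q (lam (w n).1) :=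
        M.mem_statesOn_iff.2 ⟨t, by omega, rfl⟩
      exact le_trans (M.le_MX hmem)
        (hmono (w n).1 J (w n).2.1 (hN₀ n hn₀) hJb.2)
    have hlower : M.MX M.rank q (lam J) ∈
        {r : ℕ | ∃ᶠ m in atTop, M.rank (M.run (φ w) m) = r} := by
      rw [Set.mem_setOf_eq, frequently_atTop]
      intro N
      obtain ⟨n, hn, hwn⟩ := frequently_atTop.1 hJmem N
      obtain ⟨s, hsmem, hsr⟩ := M.exists_MX M.rank q (lam J)
      obtain ⟨t, ht, hts⟩ := M.mem_statesOn_iff.1 hsmem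
      refine ⟨(upTo w n).length + t, by have := hleng w n; omega, ?_⟩
      rw [hrun w n t (by rw [hwn]; omega)]
      rw [hwn, hts, hsr]
    have hsupA : sSup {r : ℕ | ∃ᶠ m in atTop, M.rank (M.run (φ w) m) = r}
        = M.MX M.rank q (lam J) :=
      le_antisymm (DPWA.natSSup_le hupper)
        (le_csSup ⟨_, hupper⟩ hlower)
    have hpar : M.MX M.rank q (lam J) % 2 = J % 2 := by
      have := (h1 J hJb.1 hJb.2).2
      rwa [DPWA.maxRankOn_eq_MX] at this
    show Even J ↔ ParityAccept fun n => M.rank (M.run (φ w) n)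
    rw [ParityAccept]
    rw [show (sSup {r : ℕ | ∃ᶠ n in atTop, (fun m => M.rank (M.run (φ w) m)) n = r})
      = M.MX M.rank q (lam J) from hsupA]
    rw [Nat.even_iff, Nat.even_iff]
    omega
end Dir2

/-- a strongly connected deterministic parity word automaton whose
maximal flower has index `(i,k)` and which contains no dual `(i,k)‾`-flower recognises
a language Wadge equivalent to `L_{(i,k)}`. -/
theorem strongly_connected_word_automaton_wadge {Alpha Q : Type}
    [Fintype Alpha] [Nonempty Alpha] [Fintype Q]
    [TopologicalSpace Alpha] [DiscreteTopology Alpha]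
    (M : DPWA Alpha Q)
    (hreach : ∀ q, M.Reachable q)
    (hconn : ∀ p q : Q, ∃ steps, M.follow p steps = q)
    (i k : ℕ) (hi : i ≤ 1) (hik : i ≤ k)
    (hflower : M.HasFlower i k)
    (hmaximal : ∀ i' k', i' ≤ 1 → i' ≤ k' → k - i < k' - i' → ¬ M.HasFlower i' k')
    (hdual : ¬ M.HasFlower (if i = 0 then 1 else 0) (if i = 0 then k + 1 else k - 1)) :
    WadgeLE M.Lang (Lidx i k) ∧ WadgeLE (Lidx i k) M.Lang := by
  exact ⟨wadge_dir1 M hconn i k hi hik hflower hmaximal, wadge_dir2 M hreach i k hik hflower⟩
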